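/- For any commutative regular expressions e and f such that f is a linear expression and ⟦e⟧ ⊆ ⟦f⟧, the inequality e ≤ f is derivable, i.e. e ∪ f ≡ f. -/

import Mathlib

namespace CKAnote

/-- Commutative regular expressions over an alphabet `α`. -/
inductive CRE (α : Type) where
  | zero : CRE α
  | one : CRE α
  | letter : α → CRE α
  | mul : CRE α → CRE α → CRE α
  | union : CRE α → CRE α → CRE α
  | star : CRE α → CRE α

variable {α : Type} [Fintype α] [DecidableEq α]

/-- Semantics of a commutative regular expression as a set of Parikh vectors. -/
def sem : CRE α → Set (α → ℕ)
  | .zero => ∅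
  | .one => {0}
  | .letter a => {Pi.single a 1}
  | .mul e f => {w | ∃ u ∈ sem e, ∃ v ∈ sem f, w = u + v}
  | .union e f => sem e ∪ sem f
  | .star e => ↑(AddSubmonoid.closure (sem e))

/-- Provable equality: the smallest congruence containing the axioms of
commutative Kleene algebra (where `e ≤ f` abbreviates `e ∪ f ≡ f`). -/
inductive CKA : CRE α → CRE α → Prop
  | refl (e : CRE α) : CKA e e
  | symm {e f : CRE α} : CKA e f → CKA f e
  | trans {e f g : CRE α} : CKA e f → CKA f g → CKA e g
  | mul_congr {e e' f f' : CRE α} : CKA e e' → CKA f f' → CKA (e.mul f) (e'.mul f')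
  | union_congr {e e' f f' : CRE α} : CKA e e' → CKA f f' → CKA (e.union f) (e'.union f')
  | star_congr {e e' : CRE α} : CKA e e' → CKA e.star e'.star
  | mul_assoc (e f g : CRE α) : CKA (e.mul (f.mul g)) ((e.mul f).mul g)
  | mul_comm (e f : CRE α) : CKA (e.mul f) (f.mul e)
  | one_mul (e : CRE α) : CKA (CRE.one.mul e) e
  | union_assoc (e f g : CRE α) : CKA (e.union (f.union g)) ((e.union f).union g)
  | union_comm (e f : CRE α) : CKA (e.union f) (f.union e)
  | union_idem (e : CRE α) : CKA (e.union e) e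
  | zero_union (e : CRE α) : CKA (CRE.zero.union e) e
  | zero_mul (e : CRE α) : CKA (CRE.zero.mul e) CRE.zero
  | left_distrib (e f g : CRE α) : CKA (e.mul (f.union g)) ((e.mul f).union (e.mul g))
  | star_unfold (e : CRE α) : CKA ((CRE.one.union (e.mul e.star)).union e.star) e.star
  | star_lfp {e f : CRE α} : CKA ((e.mul f).union f) f → CKA ((e.star.mul f).union f) f

/-- `e ≤ f`, i.e. `e ∪ f ≡ f`. -/
def leq (e f : CRE α) : Prop := CKA (e.union f) f

/-- `e^n`, the `n`-fold product of `e` with itself. -/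
def pow (e : CRE α) : ℕ → CRE α
  | 0 => CRE.one
  | n + 1 => e.mul (pow e n)

/-- `e^{<n}`, i.e. `(e ∪ 1)^(n-1)` for `n > 0` and `0` for `n = 0`. -/
def ltPow (e : CRE α) : ℕ → CRE α
  | 0 => CRE.zero
  | n + 1 => pow (e.union CRE.one) n

/-- Finite union of a list of expressions. -/
def unionList : List (CRE α) → CRE α
  | [] => CRE.zero
  | e :: l => e.union (unionList l)

/-- Finite product of a list of expressions. -/
def prodList : List (CRE α) → CRE α
  | [] => CRE.one
  | e :: l => e.mul (prodList l)

/-- `expr(u)`: the product over `a ∈ α` of `u a` copies of the letter `a`. -/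
noncomputable def exprVec (u : α → ℕ) : CRE α :=
  prodList ((Finset.univ : Finset α).toList.map (fun a => pow (CRE.letter a) (u a)))

/-- The union `⋃_{b ∈ B} expr(b)` for a finite set of Parikh vectors `B`. -/
noncomputable def unionVecs (B : Finset (α → ℕ)) : CRE α :=
  unionList (B.toList.map exprVec)

/-- The linear expression `expr(u) · (⋃_{b ∈ B} expr(b))*`. -/
noncomputable def linExpr (u : α → ℕ) (B : Finset (α → ℕ)) : CRE α :=
  (exprVec u).mul (unionVecs B).star

/-- A finite set of Parikh vectors is independent when every Parikh vector
admits at most one representation as an `ℕ`-linear combination of its elements. -/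
def Independent (B : Finset (α → ℕ)) : Prop :=
  ∀ c d : (α → ℕ) → ℕ, (∑ b ∈ B, c b • b) = (∑ b ∈ B, d b • b) → ∀ b ∈ B, c b = d b

/-- The semilinear expression associated to a list of linear data:
the finite union of the corresponding linear expressions. -/
noncomputable def semiLin (L : List ((α → ℕ) × Finset (α → ℕ))) : CRE α :=
  unionList (L.map (fun p => linExpr p.1 p.2))

/-- The dimension of a semilinear expression: the maximum of the dimensions
of its linear components. -/
def dimSL (L : List ((α → ℕ) × Finset (α → ℕ))) : ℕ :=
  (L.map (fun p => p.2.card)).foldr max 0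

/-- Finitary (star-free) expressions. -/
def NoStar : CRE α → Prop
  | .zero => True
  | .one => True
  | .letter _ => True
  | .mul e f => NoStar e ∧ NoStar f
  | .union e f => NoStar e ∧ NoStar f
  | .star _ => False

/-- Coordinatewise embedding of `ℕ^α` into `ℚ^α`. -/
def toQ (v : α → ℕ) : α → ℚ := fun a => (v a : ℚ)

set_option linter.unusedSectionVars false

/-! ### Basic toolkit -/

theorem eq_leq {e f : CRE α} (h : CKA e f) : leq e f :=
  .trans (.union_congr h (.refl f)) (.union_idem f)

theorem leq_refl (e : CRE α) : leq e e := eq_leq (.refl e)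

theorem leq_trans {e f g : CRE α} (h1 : leq e f) (h2 : leq f g) : leq e g := by
  unfold leq at *
  exact .trans (.union_congr (.refl e) h2.symm)
    (.trans (.union_assoc e f g) (.trans (.union_congr h1 (.refl g)) h2))

theorem leq_congr_l {e e' f : CRE α} (h : CKA e e') (h2 : leq e' f) : leq e f :=
  .trans (.union_congr h (.refl f)) h2

theorem leq_congr_r {e f f' : CRE α} (h2 : leq e f) (h : CKA f f') : leq e f' :=
  .trans (.union_congr (.refl e) h.symm) (.trans h2 h)

theorem leq_antisym {e f : CRE α} (h1 : leq e f) (h2 : leq f e) : CKA e f :=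
  .trans h2.symm (.trans (.union_comm f e) h1)

theorem union_leq {e f g : CRE α} (h1 : leq e g) (h2 : leq f g) : leq (e.union f) g := by
  unfold leq at *
  exact .trans (CKA.union_assoc e f g).symm (.trans (.union_congr (.refl e) h2) h1)

theorem leq_union_l (e f : CRE α) : leq e (e.union f) :=
  CKA.trans (CKA.union_assoc e e f) (CKA.union_congr (CKA.union_idem e) (CKA.refl f))

theorem leq_union_r (e f : CRE α) : leq f (e.union f) := by
  unfold leq
  exact CKA.trans (CKA.union_comm f (e.union f))
    (CKA.trans (CKA.union_assoc e f f).symm (CKA.union_congr (CKA.refl e) (CKA.union_idem f)))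

theorem zero_leq (e : CRE α) : leq CRE.zero e := CKA.zero_union e

theorem mul_one' (e : CRE α) : CKA (e.mul CRE.one) e := .trans (.mul_comm e .one) (.one_mul e)

theorem mul_zero' (e : CRE α) : CKA (e.mul CRE.zero) CRE.zero :=
  .trans (.mul_comm e .zero) (.zero_mul e)

theorem right_distrib' (e f g : CRE α) :
    CKA ((e.union f).mul g) ((e.mul g).union (f.mul g)) :=
  .trans (.mul_comm _ g) (.trans (.left_distrib g e f)
    (.union_congr (.mul_comm g e) (.mul_comm g f)))

theorem mul_leq_l {f f' : CRE α} (e : CRE α) (h : leq f f') : leq (e.mul f) (e.mul f') :=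
  CKA.trans (CKA.left_distrib e f f').symm (CKA.mul_congr (CKA.refl e) h)

theorem mul_leq {e e' f f' : CRE α} (h1 : leq e e') (h2 : leq f f') :
    leq (e.mul f) (e'.mul f') := by
  have s1 : leq (e.mul f) (e.mul f') := mul_leq_l e h2
  have s2 : leq (f'.mul e) (f'.mul e') := mul_leq_l f' h1
  exact leq_trans s1 (leq_congr_l (CKA.mul_comm e f') (leq_congr_r s2 (CKA.mul_comm f' e')))

theorem mul_left_comm' (a b c : CRE α) : CKA (a.mul (b.mul c)) (b.mul (a.mul c)) :=
  .trans (.mul_assoc a b c) (.trans (.mul_congr (.mul_comm a b) (.refl c)) (CKA.mul_assoc b a c).symm)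

theorem mul_mul_mul' (a b c d : CRE α) :
    CKA ((a.mul b).mul (c.mul d)) ((a.mul c).mul (b.mul d)) :=
  .trans (CKA.mul_assoc a b (c.mul d)).symm
    (.trans (.mul_congr (.refl a) (mul_left_comm' b c d)) (.mul_assoc a c (b.mul d)))

/-! ### Star lemmas -/

theorem one_leq_star (e : CRE α) : leq CRE.one e.star :=
  leq_congr_r (leq_trans (leq_union_l _ _) (leq_union_l _ _)) (CKA.star_unfold e)

theorem mul_star_leq (e : CRE α) : leq (e.mul e.star) e.star :=
  leq_congr_r (leq_trans (leq_union_r _ _) (leq_union_l _ _)) (CKA.star_unfold e)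

theorem star_lfp' {e f : CRE α} (h : leq (e.mul f) f) : leq (e.star.mul f) f := CKA.star_lfp h

theorem star_star_leq (e : CRE α) : leq (e.star.mul e.star) e.star := star_lfp' (mul_star_leq e)

theorem leq_star_self (e : CRE α) : leq e e.star :=
  leq_congr_l (mul_one' e).symm (leq_trans (mul_leq_l e (one_leq_star e)) (mul_star_leq e))

theorem star_mono {e f : CRE α} (h : leq e f.star) : leq e.star f.star := by
  have h1 : leq (e.mul f.star) f.star := leq_trans (mul_leq h (leq_refl _)) (star_star_leq f)
  exact leq_congr_l (mul_one' e.star).symm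
    (leq_trans (mul_leq_l e.star (one_leq_star f)) (star_lfp' h1))

theorem star_star_eq (e : CRE α) : CKA e.star.star e.star :=
  leq_antisym (star_mono (leq_refl _)) (leq_star_self _)

theorem zero_star_eq : CKA (CRE.star (.zero : CRE α)) CRE.one := by
  apply leq_antisym
  · exact leq_congr_l (mul_one' _).symm
      (star_lfp' (leq_congr_l (.zero_mul .one) (zero_leq _)))
  · exact one_leq_star _

theorem star_union_eq (x y : CRE α) : CKA (x.union y).star (x.star.mul y.star) := by
  apply leq_antisym
  · have h1 : leq ((x.union y).mul (x.star.mul y.star)) (x.star.mul y.star) := by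
      apply leq_congr_l (right_distrib' x y _)
      apply union_leq
      · exact leq_congr_l (CKA.mul_assoc x x.star y.star)
          (mul_leq (mul_star_leq x) (leq_refl _))
      · exact leq_congr_l (mul_left_comm' y x.star y.star)
          (mul_leq_l x.star (mul_star_leq y))
    have h2 : leq CRE.one (x.star.mul y.star) :=
      leq_congr_l (CKA.one_mul CRE.one).symm (mul_leq (one_leq_star x) (one_leq_star y))
    exact leq_congr_l (mul_one' _).symm
      (leq_trans (mul_leq_l _ h2) (star_lfp' h1))
  · have hx : leq x.star (x.union y).star := star_mono (leq_trans (leq_union_l x y) (leq_star_self _))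
    have hy : leq y.star (x.union y).star := star_mono (leq_trans (leq_union_r x y) (leq_star_self _))
    exact leq_trans (mul_leq hx hy) (star_star_leq _)

theorem leq_star_star {e f : CRE α} (h : leq e f.star) : leq e.star f.star :=
  star_mono h

/-! ### pow and list lemmas -/

theorem pow_add_eq (e : CRE α) (m n : ℕ) :
    CKA (pow e (m + n)) ((pow e m).mul (pow e n)) := by
  induction n with
  | zero => exact (mul_one' _).symm
  | succ n ih =>
    show CKA (e.mul (pow e (m + n))) _
    exact .trans (.mul_congr (.refl e) ih) (mul_left_comm' e (pow e m) (pow e n))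

theorem pow_leq {e f : CRE α} (h : leq e f) (n : ℕ) : leq (pow e n) (pow f n) := by
  induction n with
  | zero => exact leq_refl _
  | succ n ih => exact mul_leq h ih

theorem pow_leq_star {e f : CRE α} (h : leq e f.star) (n : ℕ) : leq (pow e n) f.star := by
  induction n with
  | zero => exact one_leq_star f
  | succ n ih => exact leq_trans (mul_leq h ih) (star_star_leq f)

theorem mem_leq_unionList {e : CRE α} {l : List (CRE α)} (h : e ∈ l) : leq e (unionList l) := by
  induction l with
  | nil => cases h
  | cons x l ih =>
    rcases List.mem_cons.1 h with rfl | h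
    · exact leq_union_l _ _
    · exact leq_trans (ih h) (leq_union_r _ _)

theorem unionList_leq {l : List (CRE α)} {f : CRE α} (h : ∀ e ∈ l, leq e f) :
    leq (unionList l) f := by
  induction l with
  | nil => exact zero_leq f
  | cons x l ih => exact union_leq (h x (by simp)) (ih fun e he => h e (by simp [he]))

theorem unionList_append_eq (l l' : List (CRE α)) :
    CKA (unionList (l ++ l')) ((unionList l).union (unionList l')) := by
  induction l with
  | nil => exact (CKA.zero_union _).symm
  | cons x l ih =>
    exact .trans (.union_congr (.refl x) ih) (.union_assoc x (unionList l) (unionList l'))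

theorem prodList_map_leq {β : Type} {l : List β} {f g : β → CRE α}
    (h : ∀ b ∈ l, leq (f b) (g b)) :
    leq (prodList (l.map f)) (prodList (l.map g)) := by
  induction l with
  | nil => exact leq_refl _
  | cons x l ih => exact mul_leq (h x (by simp)) (ih fun b hb => h b (by simp [hb]))

theorem prodList_map_congr {β : Type} {l : List β} {f g : β → CRE α}
    (h : ∀ b ∈ l, CKA (f b) (g b)) :
    CKA (prodList (l.map f)) (prodList (l.map g)) := by
  induction l with
  | nil => exact .refl _
  | cons x l ih => exact .mul_congr (h x (by simp)) (ih fun b hb => h b (by simp [hb]))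

theorem prodList_leq_star {l : List (CRE α)} {f : CRE α} (h : ∀ e ∈ l, leq e f.star) :
    leq (prodList l) f.star := by
  induction l with
  | nil => exact one_leq_star f
  | cons x l ih =>
    exact leq_trans (mul_leq (h x (by simp)) (ih fun e he => h e (by simp [he])))
      (star_star_leq f)

theorem prodList_map_one {β : Type} {l : List β} {f : β → CRE α}
    (h : ∀ b ∈ l, CKA (f b) CRE.one) : CKA (prodList (l.map f)) CRE.one := by
  induction l with
  | nil => exact .refl _
  | cons x l ih =>
    exact .trans (.mul_congr (h x (by simp)) (ih fun b hb => h b (by simp [hb])))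
      (.one_mul _)

theorem prodList_map_mul_eq {β : Type} (l : List β) (f g : β → CRE α) :
    CKA (prodList (l.map fun b => (f b).mul (g b)))
      ((prodList (l.map f)).mul (prodList (l.map g))) := by
  induction l with
  | nil => exact (CKA.one_mul _).symm
  | cons x l ih =>
    exact .trans (.mul_congr (.refl _) ih)
      (mul_mul_mul' (f x) (g x) (prodList (l.map f)) (prodList (l.map g)))

theorem prod_absorb {β : Type} {l : List β} {f g : β → CRE α} {T : CRE α}
    (h : ∀ b ∈ l, leq (f b) (T.mul (g b))) (h1 : leq CRE.one T) (h2 : leq (T.mul T) T) :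
    leq (prodList (l.map f)) (T.mul (prodList (l.map g))) := by
  induction l with
  | nil => exact leq_congr_l (CKA.one_mul CRE.one).symm (mul_leq h1 (leq_refl _))
  | cons x l ih =>
    have step := mul_leq (h x (by simp)) (ih fun b hb => h b (by simp [hb]))
    refine leq_trans step (leq_congr_l (mul_mul_mul' T (g x) T (prodList (l.map g))) ?_)
    exact mul_leq h2 (leq_refl _)

theorem star_unionList (l : List (CRE α)) :
    CKA (unionList l).star (prodList (l.map CRE.star)) := by
  induction l with
  | nil => exact zero_star_eq
  | cons x l ih => exact .trans (star_union_eq x (unionList l)) (.mul_congr (.refl _) ih)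

/-! ### star decomposition -/

theorem one_leq_pow_union_one (e : CRE α) (k : ℕ) : leq CRE.one (pow (e.union CRE.one) k) := by
  induction k with
  | zero => exact leq_refl _
  | succ k ih =>
    exact leq_congr_l (CKA.one_mul CRE.one).symm (mul_leq (leq_union_r e CRE.one) ih)

theorem pow_union_one_absorb (e : CRE α) (k : ℕ) :
    leq (e.mul (pow (e.union CRE.one) k))
      ((pow (e.union CRE.one) k).union (pow e (k + 1))) := by
  induction k with
  | zero => exact leq_congr_l (mul_one' e) (leq_congr_l (mul_one' e).symm (leq_union_r _ _))
  | succ k ih =>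
    show leq (e.mul ((e.union CRE.one).mul (pow (e.union CRE.one) k))) _
    refine leq_congr_l (mul_left_comm' e (e.union CRE.one) _) ?_
    refine leq_trans (mul_leq_l (e.union CRE.one) ih) ?_
    refine leq_congr_l (CKA.left_distrib _ _ _) ?_
    apply union_leq
    · exact leq_union_l _ _
    · refine leq_congr_l (right_distrib' e CRE.one (pow e (k+1))) ?_
      apply union_leq
      · exact leq_union_r _ _
      · refine leq_trans (eq_leq (CKA.one_mul _)) ?_
        exact leq_trans (pow_leq (leq_union_l e CRE.one) (k+1)) (leq_union_l _ _)

theorem starDecomp (e : CRE α) (k : ℕ) :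
    leq e.star ((pow e (k + 1)).star.mul (pow (e.union CRE.one) k)) := by
  set S := (pow e (k + 1)).star with hS
  set P := pow (e.union CRE.one) k with hP
  have h1 : leq (e.mul (S.mul P)) (S.mul P) := by
    refine leq_congr_l (mul_left_comm' e S P) ?_
    refine leq_trans (mul_leq_l S (pow_union_one_absorb e k)) ?_
    refine leq_congr_l (CKA.left_distrib S P (pow e (k+1))) ?_
    apply union_leq
    · exact leq_refl _
    · refine leq_congr_l (CKA.mul_comm S (pow e (k+1))) ?_
      refine leq_trans (mul_star_leq (pow e (k+1))) ?_
      exact leq_congr_l (mul_one' S).symm (mul_leq_l S (one_leq_pow_union_one e k))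
  have h2 : leq CRE.one (S.mul P) :=
    leq_congr_l (CKA.one_mul CRE.one).symm (mul_leq (one_leq_star _) (one_leq_pow_union_one e k))
  exact leq_congr_l (mul_one' e.star).symm (leq_trans (mul_leq_l e.star h2) (star_lfp' h1))

/-! ### (x y*)* = 1 + x (x+y)* -/

theorem star_mul_star_id (x y : CRE α) :
    CKA (x.mul y.star).star (CRE.one.union (x.mul (x.union y).star)) := by
  set S := (x.union y).star with hSdef
  have hxS : leq (x.mul S) S := leq_trans (mul_leq (leq_union_l x y) (leq_refl S)) (mul_star_leq _)
  have hyS : leq (y.mul S) S := leq_trans (mul_leq (leq_union_r x y) (leq_refl S)) (mul_star_leq _)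
  apply leq_antisym
  · -- T ≤ 1 ∪ x S
    have hstep : leq ((x.mul y.star).mul (CRE.one.union (x.mul S)))
        (CRE.one.union (x.mul S)) := by
      refine leq_congr_l (CKA.left_distrib _ _ _) ?_
      apply union_leq
      · refine leq_congr_l (mul_one' _) ?_
        refine leq_trans (mul_leq_l x (star_mono (leq_trans (leq_union_r x y) (leq_star_self _)))) ?_
        exact leq_union_r _ _
      · refine leq_congr_l (CKA.mul_assoc x y.star (x.mul S)).symm ?_
        refine leq_trans (mul_leq_l x (leq_trans (mul_leq_l y.star hxS) (star_lfp' hyS))) ?_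
        exact leq_union_r _ _
    exact leq_congr_l (mul_one' _).symm
      (leq_trans (mul_leq_l _ (leq_union_l CRE.one (x.mul S))) (star_lfp' hstep))
  · apply union_leq
    · exact one_leq_star _
    · have hxy : leq x (x.mul y.star) :=
        leq_congr_l (mul_one' x).symm (mul_leq_l x (one_leq_star y))
      have hT : leq (x.mul (x.mul y.star).star) (x.mul y.star).star :=
        leq_trans (mul_leq hxy (leq_refl _)) (mul_star_leq _)
      refine leq_congr_l (CKA.mul_congr (CKA.refl x) (star_union_eq x y)) ?_
      refine leq_congr_l (mul_left_comm' x x.star y.star) ?_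
      refine leq_trans (mul_leq_l x.star (leq_star_self (x.mul y.star))) ?_
      exact star_lfp' hT

/-! ### exprVec lemmas -/

theorem exprVec_zero : CKA (exprVec (0 : α → ℕ)) CRE.one :=
  prodList_map_one fun _ _ => CKA.refl _

theorem exprVec_add (u v : α → ℕ) :
    CKA (exprVec (u + v)) ((exprVec u).mul (exprVec v)) := by
  unfold exprVec
  refine .trans (prodList_map_congr (g := fun a =>
      (pow (CRE.letter a) (u a)).mul (pow (CRE.letter a) (v a))) ?_) ?_
  · intro a _
    show CKA (pow (CRE.letter a) (u a + v a)) _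
    exact pow_add_eq _ _ _
  · exact prodList_map_mul_eq _ _ _

theorem exprVec_smul (u : α → ℕ) (n : ℕ) :
    CKA (exprVec (n • u)) (pow (exprVec u) n) := by
  induction n with
  | zero => rw [zero_smul]; exact exprVec_zero
  | succ n ih =>
    have : (n + 1) • u = u + n • u := by rw [add_smul, one_smul, add_comm]
    rw [this]
    exact .trans (exprVec_add u (n • u)) (.mul_congr (.refl _) ih)

theorem prod_single_notmem (a : α) (l : List α) (hl : a ∉ l) :
    CKA (prodList (l.map fun b => pow (CRE.letter b) ((Pi.single a 1 : α → ℕ) b))) CRE.one := by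
  refine prodList_map_one fun b hb => ?_
  have hne : b ≠ a := fun h => hl (h ▸ hb)
  rw [Pi.single_eq_of_ne hne]
  exact .refl _

theorem prod_single_mem (a : α) (l : List α) (hl : a ∈ l) (hnd : l.Nodup) :
    CKA (prodList (l.map fun b => pow (CRE.letter b) ((Pi.single a 1 : α → ℕ) b))) (CRE.letter a) := by
  induction l with
  | nil => cases hl
  | cons x l ih =>
    rcases List.mem_cons.1 hl with rfl | hmem
    · have hnl : a ∉ l := (List.nodup_cons.1 hnd).1
      show CKA ((pow (CRE.letter a) ((Pi.single a 1 : α → ℕ) a)).mul _) _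
      rw [Pi.single_eq_same]
      refine .trans (.mul_congr (.refl _) (prod_single_notmem a l hnl)) ?_
      show CKA (((CRE.letter a).mul CRE.one).mul CRE.one) _
      exact .trans (mul_one' _) (mul_one' _)
    · have hne : a ≠ x := fun h => (List.nodup_cons.1 hnd).1 (h ▸ hmem)
      show CKA ((pow (CRE.letter x) ((Pi.single a 1 : α → ℕ) x)).mul _) _
      rw [Pi.single_eq_of_ne (Ne.symm hne)]
      refine .trans (.mul_congr (.refl CRE.one) (ih hmem (List.nodup_cons.1 hnd).2)) ?_
      exact .one_mul _

theorem exprVec_single (a : α) : CKA (exprVec (Pi.single a 1)) (CRE.letter a) :=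
  prod_single_mem a _ (Finset.mem_toList.2 (Finset.mem_univ a)) (Finset.nodup_toList _)

/-! ### unionVecs lemmas -/

theorem mem_leq_unionVecs {b : α → ℕ} {B : Finset (α → ℕ)} (hb : b ∈ B) :
    leq (exprVec b) (unionVecs B) :=
  mem_leq_unionList (List.mem_map.2 ⟨b, Finset.mem_toList.2 hb, rfl⟩)

theorem unionVecs_leq {B : Finset (α → ℕ)} {f : CRE α}
    (h : ∀ b ∈ B, leq (exprVec b) f) : leq (unionVecs B) f := by
  refine unionList_leq fun e he => ?_
  rcases List.mem_map.1 he with ⟨b, hb, rfl⟩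
  exact h b (Finset.mem_toList.1 hb)

theorem unionVecs_union (A B : Finset (α → ℕ)) :
    CKA (unionVecs (A ∪ B)) ((unionVecs A).union (unionVecs B)) := by
  apply leq_antisym
  · refine unionVecs_leq fun b hb => ?_
    rcases Finset.mem_union.1 hb with h | h
    · exact leq_trans (mem_leq_unionVecs h) (leq_union_l _ _)
    · exact leq_trans (mem_leq_unionVecs h) (leq_union_r _ _)
  · refine union_leq (unionVecs_leq fun b hb => ?_) (unionVecs_leq fun b hb => ?_)
    · exact mem_leq_unionVecs (Finset.mem_union_left _ hb)
    · exact mem_leq_unionVecs (Finset.mem_union_right _ hb)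

theorem unionVecs_insert (w : α → ℕ) (B : Finset (α → ℕ)) :
    CKA (unionVecs (insert w B)) ((exprVec w).union (unionVecs B)) := by
  apply leq_antisym
  · refine unionVecs_leq fun b hb => ?_
    rcases Finset.mem_insert.1 hb with rfl | h
    · exact leq_union_l _ _
    · exact leq_trans (mem_leq_unionVecs h) (leq_union_r _ _)
  · refine union_leq (mem_leq_unionVecs (Finset.mem_insert_self w B))
      (unionVecs_leq fun b hb => mem_leq_unionVecs (Finset.mem_insert_of_mem hb))

theorem unionVecs_empty : unionVecs (∅ : Finset (α → ℕ)) = CRE.zero := by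
  unfold unionVecs
  rw [Finset.toList_empty]
  rfl

theorem vec_leq_star {c : α → ℕ} {B : Finset (α → ℕ)}
    (hc : c ∈ AddSubmonoid.closure (↑B : Set (α → ℕ))) :
    leq (exprVec c) (unionVecs B).star := by
  induction hc using AddSubmonoid.closure_induction with
  | mem x hx =>
    exact leq_trans (mem_leq_unionVecs hx) (leq_star_self _)
  | zero => exact leq_congr_l exprVec_zero (one_leq_star _)
  | add x y _ _ ihx ihy =>
    exact leq_congr_l (exprVec_add x y) (leq_trans (mul_leq ihx ihy) (star_star_leq _))

/-! ### Semantics lemmas and soundness -/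

open Pointwise in
theorem sem_mul (e f : CRE α) : sem (e.mul f) = sem e + sem f := by
  ext w
  simp only [sem, Set.mem_setOf_eq, Set.mem_add]
  constructor
  · rintro ⟨u, hu, v, hv, rfl⟩; exact ⟨u, hu, v, hv, rfl⟩
  · rintro ⟨u, hu, v, hv, rfl⟩; exact ⟨u, hu, v, hv, rfl⟩

open Pointwise in
theorem soundness {e f : CRE α} (h : CKA e f) : sem e = sem f := by
  induction h with
  | refl e => rfl
  | symm _ ih => exact ih.symm
  | trans _ _ ih1 ih2 => exact ih1.trans ih2
  | mul_congr _ _ ih1 ih2 => rw [sem_mul, sem_mul, ih1, ih2]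
  | union_congr _ _ ih1 ih2 => show sem _ ∪ sem _ = sem _ ∪ sem _; rw [ih1, ih2]
  | @star_congr e e' _ ih =>
    show (↑(AddSubmonoid.closure (sem e)) : Set (α → ℕ)) = ↑(AddSubmonoid.closure (sem e'))
    rw [ih]
  | mul_assoc e f g => simp only [sem_mul]; exact (add_assoc _ _ _).symm
  | mul_comm e f => simp only [sem_mul]; exact add_comm _ _
  | one_mul e =>
    rw [sem_mul]
    show ({0} : Set (α → ℕ)) + sem e = sem e
    rw [Set.singleton_zero, zero_add]
  | union_assoc e f g => exact (Set.union_assoc _ _ _).symm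
  | union_comm e f => exact Set.union_comm _ _
  | union_idem e => exact Set.union_self _
  | zero_union e => exact Set.empty_union _
  | zero_mul e =>
    rw [sem_mul]
    show (∅ : Set (α → ℕ)) + sem e = ∅
    exact Set.empty_add
  | left_distrib e f g =>
    rw [sem_mul]
    show sem e + (sem f ∪ sem g) = (sem (e.mul f)) ∪ (sem (e.mul g))
    rw [sem_mul, sem_mul]
    exact Set.add_union
  | star_unfold e =>
    show ({0} ∪ sem (e.mul e.star)) ∪ sem e.star = sem e.star
    rw [Set.union_eq_right]
    apply Set.union_subset
    · intro w hw
      rcases hw with rfl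
      exact AddSubmonoid.zero_mem _
    · rw [sem_mul]
      rintro w hw
      rw [Set.mem_add] at hw
      obtain ⟨u, hu, v, hv, rfl⟩ := hw
      exact AddSubmonoid.add_mem _ (AddSubmonoid.subset_closure hu) hv
  | @star_lfp e f _ ih =>
    have h1 : sem (e.mul f) ∪ sem f = sem f := ih
    rw [sem_mul] at h1
    have hef : sem e + sem f ⊆ sem f := Set.union_eq_right.1 h1
    show sem (e.star.mul f) ∪ sem f = sem f
    apply Set.union_eq_right.2
    rw [sem_mul]
    have main : ∀ c ∈ AddSubmonoid.closure (sem e), ∀ y ∈ sem f, c + y ∈ sem f := by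
      intro c hc
      induction hc using AddSubmonoid.closure_induction with
      | mem x hx => exact fun y hy => hef (Set.add_mem_add hx hy)
      | zero => exact fun y hy => by rwa [zero_add]
      | add x z hx hz ihx ihz => exact fun y hy => by rw [add_assoc]; exact ihx _ (ihz y hy)
    intro w hw
    rw [Set.mem_add] at hw
    obtain ⟨c, hc, y, hy, rfl⟩ := hw
    exact main c hc y hy

theorem leq_sound {e f : CRE α} (h : leq e f) : sem e ⊆ sem f := by
  have := soundness h
  intro w hw
  rw [← this]
  exact Or.inl hw

/-! ### Semantics of the vector expressions -/

open Pointwise in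
theorem sem_pow_letter (a : α) (n : ℕ) :
    sem (pow (CRE.letter a) n) = {Pi.single a n} := by
  induction n with
  | zero =>
    show ({0} : Set (α → ℕ)) = _
    rw [Pi.single_zero]
  | succ n ih =>
    show sem ((CRE.letter a).mul _) = _
    rw [sem_mul, ih]
    show ({Pi.single a 1} : Set (α → ℕ)) + {Pi.single a n} = _
    rw [Set.singleton_add_singleton, ← Pi.single_add]
    norm_num [add_comm]

open Pointwise in
theorem sem_prodList_singleton {β : Type} (l : List β) (g : β → CRE α) (val : β → (α → ℕ))
    (h : ∀ b ∈ l, sem (g b) = {val b}) :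
    sem (prodList (l.map g)) = {(l.map val).sum} := by
  induction l with
  | nil => rfl
  | cons x l ih =>
    show sem ((g x).mul _) = _
    rw [sem_mul, h x (by simp), ih (fun b hb => h b (by simp [hb]))]
    rw [Set.singleton_add_singleton]
    rfl

theorem list_sum_toList_map {β γ : Type} [AddCommMonoid γ] (B : Finset β) (f : β → γ) :
    (B.toList.map f).sum = ∑ b ∈ B, f b := by
  rw [← Multiset.sum_coe, ← Multiset.map_coe, Finset.coe_toList]
  exact (Finset.sum_eq_multiset_sum B f).symm

theorem sem_exprVec (u : α → ℕ) : sem (exprVec u) = {u} := by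
  unfold exprVec
  rw [sem_prodList_singleton _ _ (fun a => Pi.single a (u a))
    (fun a _ => sem_pow_letter a (u a))]
  rw [list_sum_toList_map, Finset.univ_sum_single]

theorem sem_unionList (l : List (CRE α)) (w : α → ℕ) :
    w ∈ sem (unionList l) ↔ ∃ e ∈ l, w ∈ sem e := by
  induction l with
  | nil => simp [unionList, sem]
  | cons x l ih =>
    show w ∈ sem x ∪ sem (unionList l) ↔ _
    simp only [Set.mem_union, ih, List.mem_cons]
    constructor
    · rintro (h | ⟨e, he, hw⟩)
      · exact ⟨x, Or.inl rfl, h⟩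
      · exact ⟨e, Or.inr he, hw⟩
    · rintro ⟨e, (rfl | he), hw⟩
      · exact Or.inl hw
      · exact Or.inr ⟨e, he, hw⟩

theorem sem_unionVecs (B : Finset (α → ℕ)) : sem (unionVecs B) = ↑B := by
  ext w
  rw [unionVecs, sem_unionList]
  constructor
  · rintro ⟨e, he, hw⟩
    rcases List.mem_map.1 he with ⟨b, hb, rfl⟩
    rw [sem_exprVec] at hw
    rcases hw with rfl
    exact Finset.mem_toList.1 hb
  · intro hw
    exact ⟨exprVec w, List.mem_map.2 ⟨w, Finset.mem_toList.2 hw, rfl⟩, by rw [sem_exprVec]; rfl⟩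

theorem mem_sem_linExpr {w : α → ℕ} {u : α → ℕ} {B : Finset (α → ℕ)} :
    w ∈ sem (linExpr u B) ↔
      ∃ c ∈ AddSubmonoid.closure (↑B : Set (α → ℕ)), w = u + c := by
  show w ∈ sem ((exprVec u).mul ((unionVecs B).star)) ↔ _
  have hstar : sem ((unionVecs B).star) = ↑(AddSubmonoid.closure (↑B : Set (α → ℕ))) := by
    show (↑(AddSubmonoid.closure (sem (unionVecs B))) : Set (α → ℕ)) = _
    rw [sem_unionVecs]
  rw [sem_mul, Set.mem_add, hstar, sem_exprVec]
  constructor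
  · rintro ⟨x, hx, c, hc, rfl⟩
    rcases hx with rfl
    exact ⟨c, hc, rfl⟩
  · rintro ⟨c, hc, rfl⟩
    exact ⟨u, rfl, c, hc, rfl⟩

/-- Membership in the closure of a finite set. -/
theorem closure_finset_iff (B : Finset (α → ℕ)) (c : α → ℕ) :
    c ∈ AddSubmonoid.closure (↑B : Set (α → ℕ)) ↔
      ∃ x : (α → ℕ) → ℕ, c = ∑ b ∈ B, x b • b := by
  constructor
  · intro hc
    induction hc using AddSubmonoid.closure_induction with
    | mem b hb =>
      refine ⟨fun b' => if b' = b then 1 else 0, ?_⟩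
      symm
      simp only [ite_smul, one_smul, zero_smul]
      rw [Finset.sum_ite_eq' B b (fun x => x)]
      exact if_pos (Finset.mem_coe.1 hb)
    | zero => exact ⟨0, by simp⟩
    | add x y _ _ ihx ihy =>
      obtain ⟨f, rfl⟩ := ihx
      obtain ⟨g, rfl⟩ := ihy
      exact ⟨f + g, by rw [← Finset.sum_add_distrib]; simp [add_smul]⟩
  · rintro ⟨x, rfl⟩
    exact AddSubmonoid.sum_mem _ fun b hb =>
      AddSubmonoid.nsmul_mem _ (AddSubmonoid.subset_closure hb) _

/-! ### Normal form: every expression is provably semilinear -/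

theorem lin_empty (u : α → ℕ) : CKA (linExpr u ∅) (exprVec u) := by
  show CKA ((exprVec u).mul (unionVecs (∅ : Finset (α → ℕ))).star) _
  rw [unionVecs_empty]
  exact .trans (.mul_congr (.refl _) zero_star_eq) (mul_one' _)

theorem union_zero_eq (e : CRE α) : CKA (e.union CRE.zero) e :=
  .trans (.union_comm e .zero) (.zero_union e)

theorem semiLin_single (p : (α → ℕ) × Finset (α → ℕ)) :
    CKA (semiLin [p]) (linExpr p.1 p.2) := union_zero_eq _

theorem semiLin_pair (p q : (α → ℕ) × Finset (α → ℕ)) :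
    CKA (semiLin [p, q]) ((linExpr p.1 p.2).union (linExpr q.1 q.2)) :=
  CKA.union_congr (CKA.refl _) (union_zero_eq _)

theorem semiLin_append (L1 L2 : List ((α → ℕ) × Finset (α → ℕ))) :
    CKA (semiLin (L1 ++ L2)) ((semiLin L1).union (semiLin L2)) := by
  unfold semiLin
  rw [List.map_append]
  exact unionList_append_eq _ _

theorem lin_mul (u w : α → ℕ) (A B : Finset (α → ℕ)) :
    CKA ((linExpr u A).mul (linExpr w B)) (linExpr (u + w) (A ∪ B)) := by
  refine .trans (mul_mul_mul' (exprVec u) (unionVecs A).star (exprVec w) (unionVecs B).star) ?_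
  refine .mul_congr (exprVec_add u w).symm ?_
  exact CKA.trans (star_union_eq (unionVecs A) (unionVecs B)).symm
    (CKA.star_congr (unionVecs_union A B).symm)

theorem lin_star (u : α → ℕ) (B : Finset (α → ℕ)) :
    CKA (linExpr u B).star (CRE.one.union (linExpr u (insert u B))) := by
  refine .trans (star_mul_star_id (exprVec u) (unionVecs B)) ?_
  exact CKA.union_congr (CKA.refl _)
    (CKA.mul_congr (CKA.refl _) (CKA.star_congr (unionVecs_insert u B).symm))

def mulSemi : List ((α → ℕ) × Finset (α → ℕ)) → List ((α → ℕ) × Finset (α → ℕ)) →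
    List ((α → ℕ) × Finset (α → ℕ))
  | [], _ => []
  | p :: L1, L2 => (L2.map fun q => (p.1 + q.1, p.2 ∪ q.2)) ++ mulSemi L1 L2

theorem mem_mulSemi {p : (α → ℕ) × Finset (α → ℕ)}
    {L1 L2 : List ((α → ℕ) × Finset (α → ℕ))} (h : p ∈ mulSemi L1 L2) :
    ∃ q1 ∈ L1, ∃ q2 ∈ L2, p = (q1.1 + q2.1, q1.2 ∪ q2.2) := by
  induction L1 with
  | nil => cases h
  | cons x L1 ih =>
    rcases List.mem_append.1 h with h | h
    · rcases List.mem_map.1 h with ⟨q, hq, rfl⟩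
      exact ⟨x, by simp, q, hq, rfl⟩
    · rcases ih h with ⟨q1, hq1, q2, hq2, rfl⟩
      exact ⟨q1, by simp [hq1], q2, hq2, rfl⟩

theorem lin_mul_semi (p : (α → ℕ) × Finset (α → ℕ)) (L : List ((α → ℕ) × Finset (α → ℕ))) :
    CKA ((linExpr p.1 p.2).mul (semiLin L))
      (semiLin (L.map fun q => (p.1 + q.1, p.2 ∪ q.2))) := by
  induction L with
  | nil => exact mul_zero' _
  | cons q L ih =>
    refine .trans (.left_distrib _ _ _) (.union_congr ?_ ih)
    exact lin_mul p.1 q.1 p.2 q.2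

theorem mulSemi_eq (L1 L2 : List ((α → ℕ) × Finset (α → ℕ))) :
    CKA ((semiLin L1).mul (semiLin L2)) (semiLin (mulSemi L1 L2)) := by
  induction L1 with
  | nil => exact CKA.zero_mul _
  | cons p L1 ih =>
    refine .trans (right_distrib' _ _ _) ?_
    refine .trans (.union_congr (lin_mul_semi p L2) ih) ?_
    exact (semiLin_append _ _).symm

def starSemi : List ((α → ℕ) × Finset (α → ℕ)) → List ((α → ℕ) × Finset (α → ℕ))
  | [] => [(0, ∅)]
  | p :: L => mulSemi [(0, ∅), (p.1, insert p.1 p.2)] (starSemi L)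

theorem one_eq_semiLin : CKA (CRE.one : CRE α) (semiLin [((0 : α → ℕ), ∅)]) :=
  (CKA.trans (semiLin_single _) (CKA.trans (lin_empty 0) exprVec_zero)).symm

theorem starSemi_eq (L : List ((α → ℕ) × Finset (α → ℕ))) :
    CKA (semiLin L).star (semiLin (starSemi L)) := by
  induction L with
  | nil => exact .trans zero_star_eq one_eq_semiLin
  | cons p L ih =>
    show CKA ((linExpr p.1 p.2).union (semiLin L)).star _
    refine .trans (star_union_eq _ _) ?_
    refine .trans (.mul_congr (lin_star p.1 p.2) ih) ?_
    have h2 : CKA (CRE.one.union (linExpr p.1 (insert p.1 p.2)))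
        (semiLin [((0 : α → ℕ), (∅ : Finset (α → ℕ))), (p.1, insert p.1 p.2)]) :=
      (CKA.trans (semiLin_pair ((0 : α → ℕ), (∅ : Finset (α → ℕ))) (p.1, insert p.1 p.2))
        (CKA.union_congr (CKA.trans (lin_empty 0) exprVec_zero) (CKA.refl _))).symm
    exact CKA.trans (CKA.mul_congr h2 (CKA.refl _))
      (mulSemi_eq [((0 : α → ℕ), (∅ : Finset (α → ℕ))), (p.1, insert p.1 p.2)] (starSemi L))

theorem nf (e : CRE α) : ∃ L : List ((α → ℕ) × Finset (α → ℕ)),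
    CKA e (semiLin L) ∧ (NoStar e → ∀ p ∈ L, p.2 = ∅) := by
  induction e with
  | zero => exact ⟨[], .refl _, fun _ p hp => absurd hp List.not_mem_nil⟩
  | one =>
    refine ⟨[(0, ∅)], one_eq_semiLin, fun _ p hp => ?_⟩
    rcases List.mem_singleton.1 hp with rfl
    rfl
  | letter a =>
    refine ⟨[(Pi.single a 1, ∅)], ?_, fun _ p hp => ?_⟩
    · exact (CKA.trans (semiLin_single _) (CKA.trans (lin_empty _) (exprVec_single a))).symm
    · rcases List.mem_singleton.1 hp with rfl
      rfl
  | mul e f ih1 ih2 =>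
    obtain ⟨L1, h1, hn1⟩ := ih1
    obtain ⟨L2, h2, hn2⟩ := ih2
    refine ⟨mulSemi L1 L2, .trans (.mul_congr h1 h2) (mulSemi_eq L1 L2), fun hns p hp => ?_⟩
    rcases mem_mulSemi hp with ⟨q1, hq1, q2, hq2, rfl⟩
    have e1 : q1.2 = ∅ := hn1 hns.1 q1 hq1
    have e2 : q2.2 = ∅ := hn2 hns.2 q2 hq2
    show q1.2 ∪ q2.2 = ∅
    rw [e1, e2, Finset.empty_union]
  | union e f ih1 ih2 =>
    obtain ⟨L1, h1, hn1⟩ := ih1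
    obtain ⟨L2, h2, hn2⟩ := ih2
    refine ⟨L1 ++ L2, .trans (.union_congr h1 h2) (semiLin_append L1 L2).symm,
      fun hns p hp => ?_⟩
    rcases List.mem_append.1 hp with h | h
    · exact hn1 hns.1 p h
    · exact hn2 hns.2 p h
  | star e ih =>
    obtain ⟨L, h1, _⟩ := ih
    exact ⟨starSemi L, .trans (.star_congr h1) (starSemi_eq L), fun hns => absurd hns id⟩

/-! ### Star-free inclusion -/

theorem nsInc {F : CRE α} (hF : NoStar F) {v : α → ℕ} {B : Finset (α → ℕ)}
    (hsem : sem F ⊆ sem (linExpr v B)) : leq F (linExpr v B) := by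
  obtain ⟨L, hL, hns⟩ := nf F
  have hns := hns hF
  have hcomp : ∀ x ∈ L.map (fun p => linExpr p.1 p.2), leq x (linExpr v B) := by
    intro x hx
    rcases List.mem_map.1 hx with ⟨p, hp, rfl⟩
    have hp2 := hns p hp
    have hlin : CKA (linExpr p.1 p.2) (exprVec p.1) := by rw [hp2]; exact lin_empty p.1
    have hmem1 : p.1 ∈ sem (linExpr p.1 p.2) :=
      mem_sem_linExpr.2 ⟨0, AddSubmonoid.zero_mem _, (add_zero _).symm⟩
    have hmem2 : p.1 ∈ sem (semiLin L) :=
      leq_sound (mem_leq_unionList (List.mem_map.2 ⟨p, hp, rfl⟩)) hmem1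
    have hmem : p.1 ∈ sem (linExpr v B) := hsem (by rwa [soundness hL])
    obtain ⟨c, hc, hpc⟩ := mem_sem_linExpr.1 hmem
    refine leq_congr_l hlin ?_
    rw [hpc]
    exact leq_congr_l (exprVec_add v c) (mul_leq_l (exprVec v) (vec_leq_star hc))
  exact leq_congr_l hL (unionList_leq hcomp)

/-! ### Dickson argument -/

theorem existsN {u v b : α → ℕ} {B : Finset (α → ℕ)}
    (h : ∀ k : ℕ, ∃ c ∈ AddSubmonoid.closure (↑B : Set (α → ℕ)), u + k • b = v + c) :
    ∃ N, 1 ≤ N ∧ (N • b) ∈ AddSubmonoid.closure (↑B : Set (α → ℕ)) := by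
  have h' : ∀ k : ℕ, ∃ x : (α → ℕ) → ℕ, u + k • b = v + ∑ b' ∈ B, x b' • b' := by
    intro k
    obtain ⟨c, hc, hk⟩ := h k
    obtain ⟨x, rfl⟩ := (closure_finset_iff B c).1 hc
    exact ⟨x, hk⟩
  choose x hx using h'
  have hpwo : (Set.univ : Set ({b' // b' ∈ B} → ℕ)).IsPWO :=
    Set.isPWO_of_wellQuasiOrderedLE _
  obtain ⟨m, n, hmn, hle⟩ := Set.partiallyWellOrderedOn_iff_exists_lt.1 hpwo (fun k => fun b' => x k b'.1) (fun _ => Set.mem_univ _)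
  refine ⟨n - m, by omega, ?_⟩
  rw [closure_finset_iff]
  refine ⟨fun b' => x n b' - x m b', ?_⟩
  have hsum : ∑ b' ∈ B, x n b' • b'
      = (∑ b' ∈ B, x m b' • b') + ∑ b' ∈ B, (x n b' - x m b') • b' := by
    rw [← Finset.sum_add_distrib]
    refine Finset.sum_congr rfl fun b' hb' => ?_
    rw [← add_smul]
    congr 1
    have := hle ⟨b', hb'⟩
    simp only at this
    omega
  have e1 := hx n
  have e2 := hx m
  have e3 : u + n • b = (u + m • b) + (n - m) • b := by
    rw [add_assoc, ← add_smul]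
    congr 2
    omega
  have main : (v + ∑ b' ∈ B, x m b' • b') + (n - m) • b
      = (v + ∑ b' ∈ B, x m b' • b') + ∑ b' ∈ B, (x n b' - x m b') • b' := by
    calc (v + ∑ b' ∈ B, x m b' • b') + (n - m) • b
        = (u + m • b) + (n - m) • b := by rw [e2]
      _ = u + n • b := e3.symm
      _ = v + ∑ b' ∈ B, x n b' • b' := e1
      _ = v + (∑ b' ∈ B, x m b' • b' + ∑ b' ∈ B, (x n b' - x m b') • b') := by rw [hsum]
      _ = (v + ∑ b' ∈ B, x m b' • b') + ∑ b' ∈ B, (x n b' - x m b') • b' :=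
          (add_assoc _ _ _).symm
  exact add_left_cancel main

/-! ### NoStar lemmas -/

theorem noStar_pow {e : CRE α} (h : NoStar e) (n : ℕ) : NoStar (pow e n) := by
  induction n with
  | zero => trivial
  | succ n ih => exact ⟨h, ih⟩

theorem noStar_prodList {l : List (CRE α)} (h : ∀ e ∈ l, NoStar e) : NoStar (prodList l) := by
  induction l with
  | nil => trivial
  | cons x l ih => exact ⟨h x (by simp), ih fun e he => h e (by simp [he])⟩

theorem noStar_exprVec (u : α → ℕ) : NoStar (exprVec u) := by
  refine noStar_prodList fun e he => ?_
  rcases List.mem_map.1 he with ⟨a, _, rfl⟩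
  exact noStar_pow (e := CRE.letter a) trivial (u a)

theorem noStar_ltPow {e : CRE α} (h : NoStar e) (n : ℕ) : NoStar (ltPow e n) := by
  cases n with
  | zero => trivial
  | succ n => exact noStar_pow (e := e.union CRE.one) ⟨h, trivial⟩ n

/-! ### Base inclusion -/

theorem baseInc (u w : α → ℕ) (A B : Finset (α → ℕ))
    (h : sem (linExpr u A) ⊆ sem (linExpr w B)) :
    leq (linExpr u A) (linExpr w B) := by
  have key : ∀ b : α → ℕ, ∃ N, 1 ≤ N ∧
      (b ∈ A → (N • b) ∈ AddSubmonoid.closure (↑B : Set (α → ℕ))) := by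
    intro b
    by_cases hb : b ∈ A
    · have hin : ∀ k : ℕ, ∃ c ∈ AddSubmonoid.closure (↑B : Set (α → ℕ)),
          u + k • b = w + c := by
        intro k
        have hm : u + k • b ∈ sem (linExpr u A) :=
          mem_sem_linExpr.2 ⟨k • b,
            AddSubmonoid.nsmul_mem _ (AddSubmonoid.subset_closure hb) k, rfl⟩
        exact mem_sem_linExpr.1 (h hm)
      obtain ⟨N, hN1, hN2⟩ := existsN hin
      exact ⟨N, hN1, fun _ => hN2⟩
    · exact ⟨1, le_refl 1, fun h' => absurd h' hb⟩
  choose N hN1 hN2 using key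
  have step1 : CKA (unionVecs A).star
      (prodList (A.toList.map fun b => (exprVec b).star)) := by
    have h0 := star_unionList (A.toList.map exprVec)
    rwa [List.map_map] at h0
  have step2 : ∀ b ∈ A.toList,
      leq ((exprVec b).star) (((unionVecs B).star).mul (ltPow (exprVec b) (N b))) := by
    intro b hb
    have hbA : b ∈ A := Finset.mem_toList.1 hb
    obtain ⟨k, hk⟩ : ∃ k, N b = k + 1 := ⟨N b - 1, by have := hN1 b; omega⟩
    have hsm : CKA (exprVec (N b • b)) (pow (exprVec b) (k + 1)) := by
      rw [← hk]; exact exprVec_smul b (N b)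
    have hpow : leq ((pow (exprVec b) (k + 1)).star) ((unionVecs B).star) :=
      leq_star_star (leq_congr_l hsm.symm (vec_leq_star (hN2 b hbA)))
    rw [hk]
    exact leq_trans (starDecomp (exprVec b) k) (mul_leq hpow (leq_refl _))
  have step3 : leq (prodList (A.toList.map fun b => (exprVec b).star))
      (((unionVecs B).star).mul
        (prodList (A.toList.map fun b => ltPow (exprVec b) (N b)))) :=
    prod_absorb step2 (one_leq_star _) (star_star_leq _)
  have step4 : leq (linExpr u A)
      (((unionVecs B).star).mul ((exprVec u).mul
        (prodList (A.toList.map fun b => ltPow (exprVec b) (N b))))) := by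
    refine leq_congr_l (CKA.mul_congr (CKA.refl (exprVec u)) step1) ?_
    exact leq_congr_r (mul_leq_l (exprVec u) step3)
      (mul_left_comm' (exprVec u) ((unionVecs B).star) _)
  have hNSF : NoStar ((exprVec u).mul
      (prodList (A.toList.map fun b => ltPow (exprVec b) (N b)))) := by
    refine ⟨noStar_exprVec u, noStar_prodList fun e he => ?_⟩
    rcases List.mem_map.1 he with ⟨b, _, rfl⟩
    exact noStar_ltPow (noStar_exprVec b) (N b)
  have hFA : leq ((exprVec u).mul
      (prodList (A.toList.map fun b => ltPow (exprVec b) (N b)))) (linExpr u A) := by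
    refine mul_leq_l (exprVec u) (prodList_leq_star fun e he => ?_)
    rcases List.mem_map.1 he with ⟨b, hb, rfl⟩
    have hbA : b ∈ A := Finset.mem_toList.1 hb
    obtain ⟨k, hk⟩ : ∃ k, N b = k + 1 := ⟨N b - 1, by have := hN1 b; omega⟩
    rw [hk]
    refine pow_leq_star (union_leq ?_ (one_leq_star _)) k
    exact leq_trans (mem_leq_unionVecs hbA) (leq_star_self _)
  have step7 : leq ((exprVec u).mul
      (prodList (A.toList.map fun b => ltPow (exprVec b) (N b)))) (linExpr w B) :=
    nsInc hNSF (fun y hy => h (leq_sound hFA hy))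
  refine leq_trans step4 (leq_trans (mul_leq_l ((unionVecs B).star) step7) ?_)
  exact leq_congr_l (mul_left_comm' ((unionVecs B).star) (exprVec w) ((unionVecs B).star))
    (mul_leq_l (exprVec w) (star_star_leq (unionVecs B)))


/-- If `f` is linear and `⟦e⟧ ⊆ ⟦f⟧`, then `e ≤ f` is derivable. -/
theorem corBaseInclusion (e : CRE α) (v : α → ℕ) (B : Finset (α → ℕ))
    (h : sem e ⊆ sem (linExpr v B)) :
    leq e (linExpr v B) := by
  obtain ⟨L, hL, -⟩ := nf e
  have hcomp : ∀ x ∈ L.map (fun p => linExpr p.1 p.2), leq x (linExpr v B) := by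
    intro x hx
    rcases List.mem_map.1 hx with ⟨p, hp, rfl⟩
    refine baseInc p.1 v p.2 B ?_
    intro y hy
    apply h
    rw [soundness hL]
    exact leq_sound (mem_leq_unionList (List.mem_map.2 ⟨p, hp, rfl⟩)) hy
  exact leq_congr_l hL (unionList_leq hcomp)

end CKAnote
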